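/- The map ζ is recovered from α and β, and the product in X recombines accordingly: for all h ∈ H and a ∈ A, ζ(h ⊗ a) = Σ α(h₁ ⊗ a₁) ⊗ β(h₂ ⊗ a₂) in A ⊗ H, and consequently j_H(h)·j_A(a) = Σ j_A(α(h₁ ⊗ a₁))·j_H(β(h₂ ⊗ a₂)) in X. -/

import Mathlib

open TensorProduct

noncomputable section

universe u

variable {k A H X : Type u} [Field k]
  [Ring A] [Ring H] [Ring X]
  [Bialgebra k A] [Bialgebra k H] [Bialgebra k X]

/-- ζ : H ⊗ A → A ⊗ H, ζ(h ⊗ a) = ξ⁻¹(j_H(h) · j_A(a)). -/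
def zetaF (jA : A →ₐc[k] X) (jH : H →ₐc[k] X) (ξ : (A ⊗[k] H) ≃ₗ[k] X) :
    H ⊗[k] A →ₗ[k] A ⊗[k] H :=
  ξ.symm.toLinearMap ∘ₗ LinearMap.mul' k X ∘ₗ
    TensorProduct.map (jH : H →ₗ[k] X) (jA : A →ₗ[k] X)

/-- α := (id_A ⊗ ε_H) ∘ ζ. -/
def alphaF (jA : A →ₐc[k] X) (jH : H →ₐc[k] X) (ξ : (A ⊗[k] H) ≃ₗ[k] X) :
    H ⊗[k] A →ₗ[k] A :=
  (TensorProduct.rid k A).toLinearMap ∘ₗ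
    TensorProduct.map LinearMap.id Coalgebra.counit ∘ₗ zetaF jA jH ξ

/-- β := (ε_A ⊗ id_H) ∘ ζ. -/
def betaF (jA : A →ₐc[k] X) (jH : H →ₐc[k] X) (ξ : (A ⊗[k] H) ≃ₗ[k] X) :
    H ⊗[k] A →ₗ[k] H :=
  (TensorProduct.lid k H).toLinearMap ∘ₗ
    TensorProduct.map Coalgebra.counit LinearMap.id ∘ₗ zetaF jA jH ξ

section Aux

open Coalgebra

variable {M N : Type u} [AddCommGroup M] [AddCommGroup N] [Module k M] [Module k N]
  [Coalgebra k M] [Coalgebra k N]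

lemma comul_tmul_repr (m : M) (n : N) (rm : Coalgebra.Repr k m (M × M)) (rn : Coalgebra.Repr k n (N × N)) :
    Coalgebra.comul (R := k) (m ⊗ₜ[k] n) =
      ∑ i ∈ rm.index, ∑ j ∈ rn.index,
        (rm.left i ⊗ₜ[k] rn.left j) ⊗ₜ[k] (rm.right i ⊗ₜ[k] rn.right j) := by
  have h0 : Coalgebra.comul (R := k) (m ⊗ₜ[k] n)
      = TensorProduct.tensorTensorTensorComm k M M N N
          (Coalgebra.comul (R := k) m ⊗ₜ[k] Coalgebra.comul (R := k) n) := rfl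
  rw [h0, ← rm.eq, ← rn.eq]
  rw [TensorProduct.sum_tmul]
  simp only [TensorProduct.tmul_sum, map_sum, TensorProduct.tensorTensorTensorComm_tmul]

lemma sum_counit_smul_right (m : M) (r : Coalgebra.Repr k m (M × M)) :
    ∑ i ∈ r.index, Coalgebra.counit (R := k) (r.right i) • r.left i = m := by
  have h := congrArg (TensorProduct.rid k M) (Coalgebra.sum_tmul_counit_eq (R := k) r)
  rw [map_sum] at h
  simp only [TensorProduct.rid_tmul, one_smul] at h
  exact h

lemma sum_counit_smul_left (m : M) (r : Coalgebra.Repr k m (M × M)) :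
    ∑ i ∈ r.index, Coalgebra.counit (R := k) (r.left i) • r.right i = m := by
  have h := congrArg (TensorProduct.lid k M) (Coalgebra.sum_counit_tmul_eq (R := k) r)
  rw [map_sum] at h
  simp only [TensorProduct.lid_tmul, one_smul] at h
  exact h

/-- The counit property for the tensor product coalgebra, in the form needed. -/
lemma counit_prop (w : M ⊗[k] N) :
    TensorProduct.map
      ((TensorProduct.rid k M).toLinearMap ∘ₗ TensorProduct.map LinearMap.id Coalgebra.counit)
      ((TensorProduct.lid k N).toLinearMap ∘ₗ TensorProduct.map Coalgebra.counit LinearMap.id)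
      (Coalgebra.comul (R := k) w) = w := by
  induction w using TensorProduct.induction_on with
  | zero => simp
  | add x y hx hy => rw [map_add, map_add, hx, hy]
  | tmul m n =>
    set rm := ℛ k m
    set rn := ℛ k n
    rw [comul_tmul_repr m n rm rn]
    rw [map_sum]
    simp only [map_sum, TensorProduct.map_tmul, LinearMap.coe_comp, Function.comp_apply,
      LinearMap.id_coe, id_eq, LinearEquiv.coe_coe, TensorProduct.rid_tmul,
      TensorProduct.lid_tmul]
    have key : ∀ i j, (Coalgebra.counit (R := k) (rn.left j) • rm.left i) ⊗ₜ[k]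
        (Coalgebra.counit (R := k) (rm.right i) • rn.right j)
        = (Coalgebra.counit (R := k) (rm.right i) • rm.left i) ⊗ₜ[k]
          (Coalgebra.counit (R := k) (rn.left j) • rn.right j) := by
      intro i j
      rw [TensorProduct.tmul_smul, TensorProduct.tmul_smul, ← TensorProduct.smul_tmul',
        ← TensorProduct.smul_tmul', smul_comm]
    simp only [key]
    simp only [← TensorProduct.tmul_sum]
    rw [← TensorProduct.sum_tmul, sum_counit_smul_right m rm, sum_counit_smul_left n rn]

end Aux

section Xi

open Coalgebra

variable (jA : A →ₐc[k] X) (jH : H →ₐc[k] X) (ξ : (A ⊗[k] H) ≃ₗ[k] X)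
  (hξ : ∀ (a : A) (h : H), ξ (a ⊗ₜ[k] h) = jA a * jH h)

include hξ

lemma comul_mul_repr (a : A) (h : H) (ra : Coalgebra.Repr k a (A × A)) (rh : Coalgebra.Repr k h (H × H)) :
    Coalgebra.comul (R := k) (jA a * jH h)
      = ∑ i ∈ ra.index, ∑ j ∈ rh.index,
          (jA (ra.left i) * jH (rh.left j)) ⊗ₜ[k] (jA (ra.right i) * jH (rh.right j)) := by
  have hA : Coalgebra.comul (R := k) (jA a)
      = ∑ i ∈ ra.index, jA (ra.left i) ⊗ₜ[k] jA (ra.right i) := by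
    rw [← CoalgHomClass.map_comp_comul_apply jA a, ← ra.eq, map_sum]
    simp
  have hH : Coalgebra.comul (R := k) (jH h)
      = ∑ j ∈ rh.index, jH (rh.left j) ⊗ₜ[k] jH (rh.right j) := by
    rw [← CoalgHomClass.map_comp_comul_apply jH h, ← rh.eq, map_sum]
    simp
  rw [Bialgebra.comul_mul, hA, hH, Finset.sum_mul_sum]
  simp only [Algebra.TensorProduct.tmul_mul_tmul]

lemma comul_mul_repr' (h : H) (a : A) (rh : Coalgebra.Repr k h (H × H)) (ra : Coalgebra.Repr k a (A × A)) :
    Coalgebra.comul (R := k) (jH h * jA a)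
      = ∑ i ∈ rh.index, ∑ j ∈ ra.index,
          (jH (rh.left i) * jA (ra.left j)) ⊗ₜ[k] (jH (rh.right i) * jA (ra.right j)) := by
  have hA : Coalgebra.comul (R := k) (jA a)
      = ∑ i ∈ ra.index, jA (ra.left i) ⊗ₜ[k] jA (ra.right i) := by
    rw [← CoalgHomClass.map_comp_comul_apply jA a, ← ra.eq, map_sum]
    simp
  have hH : Coalgebra.comul (R := k) (jH h)
      = ∑ j ∈ rh.index, jH (rh.left j) ⊗ₜ[k] jH (rh.right j) := by
    rw [← CoalgHomClass.map_comp_comul_apply jH h, ← rh.eq, map_sum]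
    simp
  rw [Bialgebra.comul_mul, hH, hA, Finset.sum_mul_sum]
  simp only [Algebra.TensorProduct.tmul_mul_tmul]

lemma xi_comul (y : A ⊗[k] H) :
    Coalgebra.comul (R := k) (ξ y)
      = TensorProduct.map ξ.toLinearMap ξ.toLinearMap (Coalgebra.comul (R := k) y) := by
  induction y using TensorProduct.induction_on with
  | zero => simp only [map_zero]
  | add x y hx hy => simp only [map_add, hx, hy]
  | tmul a h =>
    rw [hξ, comul_mul_repr jA jH ξ hξ a h (ℛ k a) (ℛ k h), comul_tmul_repr a h (ℛ k a) (ℛ k h)]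
    simp only [map_sum, TensorProduct.map_tmul, LinearEquiv.coe_coe, hξ]

lemma xi_symm_comul (x : X) :
    Coalgebra.comul (R := k) (ξ.symm x)
      = TensorProduct.map ξ.symm.toLinearMap ξ.symm.toLinearMap (Coalgebra.comul (R := k) x) := by
  have h1 := xi_comul jA jH ξ hξ (ξ.symm x)
  rw [ξ.apply_symm_apply] at h1
  have h2 : ξ.symm.toLinearMap ∘ₗ ξ.toLinearMap = LinearMap.id := by
    ext y; simp
  calc Coalgebra.comul (R := k) (ξ.symm x)
      = TensorProduct.map LinearMap.id LinearMap.id (Coalgebra.comul (R := k) (ξ.symm x)) := by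
        rw [TensorProduct.map_id, LinearMap.id_apply]
    _ = TensorProduct.map (ξ.symm.toLinearMap ∘ₗ ξ.toLinearMap)
          (ξ.symm.toLinearMap ∘ₗ ξ.toLinearMap) (Coalgebra.comul (R := k) (ξ.symm x)) := by
        rw [h2]
    _ = TensorProduct.map ξ.symm.toLinearMap ξ.symm.toLinearMap
          (TensorProduct.map ξ.toLinearMap ξ.toLinearMap
            (Coalgebra.comul (R := k) (ξ.symm x))) := by
        rw [TensorProduct.map_comp, LinearMap.comp_apply]
    _ = TensorProduct.map ξ.symm.toLinearMap ξ.symm.toLinearMap (Coalgebra.comul (R := k) x) := by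
        rw [← h1]

end Xi

/-- ζ is recovered from α and β:
ζ(h ⊗ a) = Σ α(h₁ ⊗ a₁) ⊗ β(h₂ ⊗ a₂), and consequently
j_H(h)·j_A(a) = Σ j_A(α(h₁ ⊗ a₁))·j_H(β(h₂ ⊗ a₂)) in X. -/
theorem zeta_eq_alpha_beta (jA : A →ₐc[k] X) (jH : H →ₐc[k] X)
    (ξ : (A ⊗[k] H) ≃ₗ[k] X)
    (hξ : ∀ (a : A) (h : H), ξ (a ⊗ₜ[k] h) = jA a * jH h) :
    ∀ (h : H) (a : A),
      zetaF jA jH ξ (h ⊗ₜ[k] a)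
        = TensorProduct.map (alphaF jA jH ξ) (betaF jA jH ξ)
            (Coalgebra.comul (R := k) (h ⊗ₜ[k] a)) ∧
      jH h * jA a
        = LinearMap.mul' k X
            (TensorProduct.map
              ((jA : A →ₗ[k] X) ∘ₗ alphaF jA jH ξ)
              ((jH : H →ₗ[k] X) ∘ₗ betaF jA jH ξ)
              (Coalgebra.comul (R := k) (h ⊗ₜ[k] a))) := by
  intro h a
  classical
  set rh := Coalgebra.Repr.arbitrary k h with hrh
  set ra := Coalgebra.Repr.arbitrary k a with hra
  have hzeta : ∀ (h' : H) (a' : A),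
      zetaF jA jH ξ (h' ⊗ₜ[k] a') = ξ.symm (jH h' * jA a') := by
    intro h' a'
    simp [zetaF]
  have hcom : Coalgebra.comul (R := k) (zetaF jA jH ξ (h ⊗ₜ[k] a))
      = ∑ i ∈ rh.index, ∑ j ∈ ra.index,
          zetaF jA jH ξ (rh.left i ⊗ₜ[k] ra.left j)
            ⊗ₜ[k] zetaF jA jH ξ (rh.right i ⊗ₜ[k] ra.right j) := by
    rw [hzeta, xi_symm_comul jA jH ξ hξ, comul_mul_repr' jA jH ξ hξ h a rh ra]
    simp only [map_sum, TensorProduct.map_tmul, LinearEquiv.coe_toLinearMap]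
    refine Finset.sum_congr rfl fun i _ => Finset.sum_congr rfl fun j _ => ?_
    rw [hzeta, hzeta]
  have main : zetaF jA jH ξ (h ⊗ₜ[k] a)
      = TensorProduct.map (alphaF jA jH ξ) (betaF jA jH ξ)
          (Coalgebra.comul (R := k) (h ⊗ₜ[k] a)) := by
    have hrhs : TensorProduct.map (alphaF jA jH ξ) (betaF jA jH ξ)
        (Coalgebra.comul (R := k) (h ⊗ₜ[k] a))
        = ∑ i ∈ rh.index, ∑ j ∈ ra.index,
            alphaF jA jH ξ (rh.left i ⊗ₜ[k] ra.left j)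
              ⊗ₜ[k] betaF jA jH ξ (rh.right i ⊗ₜ[k] ra.right j) := by
      rw [comul_tmul_repr h a rh ra]
      simp only [map_sum, TensorProduct.map_tmul]
    have hlhs := (counit_prop (zetaF jA jH ξ (h ⊗ₜ[k] a))).symm
    rw [hcom] at hlhs
    rw [hlhs, hrhs]
    simp only [map_sum, TensorProduct.map_tmul]
    refine Finset.sum_congr rfl fun i _ => Finset.sum_congr rfl fun j _ => ?_
    simp [alphaF, betaF]
  refine ⟨main, ?_⟩
  have hmul : ∀ t : A ⊗[k] H,
      LinearMap.mul' k X (TensorProduct.map (jA : A →ₗ[k] X) (jH : H →ₗ[k] X) t) = ξ t := by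
    intro t
    induction t using TensorProduct.induction_on with
    | zero => simp only [map_zero]
    | add x y hx hy => simp only [map_add, hx, hy]
    | tmul a' h' => simp [hξ]
  rw [TensorProduct.map_comp, LinearMap.comp_apply, hmul, ← main, hzeta, ξ.apply_symm_apply]
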